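/- Let γ₁ = -K e^ξ sin θ/(1-e^{2ξ}), γ₂ = -2kc e^{2ξ}/(1-e^{2ξ}), γ₃ = K(e^ξ cos θ - e^{2ξ})/(1-e^{2ξ}) with K = k(f+βs)c²/ĝ, ξ = k(r - m(s)), and m_s = (f+βs)c/ĝ. Then γ₁·∂γ₁/∂r + γ₂·∂γ₂/∂r + γ₃·∂γ₃/∂r (derivatives at fixed s, θ) multiplied by the factor (1-e^ξcos θ)/(1-e^{2ξ}) (coming from ∂r/∂z) equals K²·k e^{2ξ}·(1-e^ξ cos θ)/(1-e^{2ξ})⁴ · [1 - 3e^ξ cos θ + 3e^{2ξ} - e^{3ξ} cos θ + (8/m_s²)e^{2ξ}]. -/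
import Mathlib


open Real

set_option maxHeartbeats 1000000 in
theorem aux_vort (E C S K k c M : ℝ) (hden : 1 - E ^ 2 ≠ 0) (hM : M ≠ 0)
    (hS : S ^ 2 = 1 - C ^ 2) (hKc : K = k * c * M) :
    (-(K * E * S / (1 - E ^ 2)) *
        (-((K * (E * k) * S * (1 - E ^ 2) - K * E * S * (0 - E ^ 2 * (2 * k))) /
          (1 - E ^ 2) ^ 2)) +
      -(2 * k * c * E ^ 2 / (1 - E ^ 2)) *
        (-((2 * k * c * (E ^ 2 * (2 * k)) * (1 - E ^ 2) -
            2 * k * c * E ^ 2 * (0 - E ^ 2 * (2 * k))) / (1 - E ^ 2) ^ 2)) +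
      K * (E * C - E ^ 2) / (1 - E ^ 2) *
        ((K * (E * k * C - E ^ 2 * (2 * k)) * (1 - E ^ 2) -
          K * (E * C - E ^ 2) * (0 - E ^ 2 * (2 * k))) / (1 - E ^ 2) ^ 2)) *
      ((1 - E * C) / (1 - E ^ 2)) =
    K ^ 2 * k * E ^ 2 * (1 - E * C) / (1 - E ^ 2) ^ 4 *
      (1 - 3 * E * C + 3 * E ^ 2 - E ^ 3 * C + 8 / M ^ 2 * E ^ 2) := by
  subst hKc
  field_simp
  ring_nf
  simp only [hS]
  ring

/-- key vorticity-magnitude computation (4.5). -/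
theorem vorticity_magnitude_key_identity
    (k c ghat f β s θ K ms : ℝ)
    (hk : 0 < k) (hc : 0 < c) (hghat : 0 < ghat) (hfs : f + β * s ≠ 0)
    (hK : K = k * (f + β * s) * c ^ 2 / ghat)
    (hms : ms = (f + β * s) * c / ghat)
    (m : ℝ → ℝ) (γ₁ γ₂ γ₃ : ℝ → ℝ)
    (hγ₁ : ∀ r, γ₁ r = -(K * exp (k * (r - m s)) * sin θ /
      (1 - exp (2 * k * (r - m s)))))
    (hγ₂ : ∀ r, γ₂ r = -(2 * k * c * exp (2 * k * (r - m s)) /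
      (1 - exp (2 * k * (r - m s)))))
    (hγ₃ : ∀ r, γ₃ r = K * (exp (k * (r - m s)) * cos θ - exp (2 * k * (r - m s))) /
      (1 - exp (2 * k * (r - m s)))) :
    ∀ r, k * (r - m s) < 0 →
      (γ₁ r * deriv γ₁ r + γ₂ r * deriv γ₂ r + γ₃ r * deriv γ₃ r) *
          ((1 - exp (k * (r - m s)) * cos θ) / (1 - exp (2 * k * (r - m s)))) =
        K ^ 2 * k * exp (2 * k * (r - m s)) *
          (1 - exp (k * (r - m s)) * cos θ) / (1 - exp (2 * k * (r - m s))) ^ 4 *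
          (1 - 3 * exp (k * (r - m s)) * cos θ + 3 * exp (2 * k * (r - m s)) -
            exp (3 * k * (r - m s)) * cos θ + 8 / ms ^ 2 * exp (2 * k * (r - m s))) := by
  subst hK hms
  intro r hr
  have h2r : 2 * k * (r - m s) < 0 := by nlinarith
  have hlt : exp (2 * k * (r - m s)) < 1 := exp_lt_one_iff.mpr h2r
  have hden : 1 - exp (2 * k * (r - m s)) ≠ 0 := by nlinarith
  -- derivatives
  have h1 : HasDerivAt (fun x => k * (x - m s)) k r := by
    simpa using ((hasDerivAt_id r).sub_const (m s)).const_mul k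
  have h2 : HasDerivAt (fun x => 2 * k * (x - m s)) (2 * k) r := by
    simpa using ((hasDerivAt_id r).sub_const (m s)).const_mul (2 * k)
  have hE : HasDerivAt (fun x => exp (k * (x - m s))) (exp (k * (r - m s)) * k) r := h1.exp
  have hE2 : HasDerivAt (fun x => exp (2 * k * (x - m s)))
      (exp (2 * k * (r - m s)) * (2 * k)) r := h2.exp
  have hD : HasDerivAt (fun x => 1 - exp (2 * k * (x - m s)))
      (0 - exp (2 * k * (r - m s)) * (2 * k)) r := (hasDerivAt_const r 1).sub hE2
  set K := k * (f + β * s) * c ^ 2 / ghat with hKdef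
  set E := exp (k * (r - m s)) with hE1def
  set E2 := exp (2 * k * (r - m s)) with hE2def
  have hd1 : HasDerivAt γ₁
      (-((K * (E * k) * sin θ * (1 - E2) - K * E * sin θ * (0 - E2 * (2 * k))) /
        (1 - E2) ^ 2)) r := by
    rw [funext hγ₁]
    exact (((hE.const_mul K).mul_const (sin θ)).div hD hden).neg
  have hd2 : HasDerivAt γ₂
      (-((2 * k * c * (E2 * (2 * k)) * (1 - E2) - 2 * k * c * E2 * (0 - E2 * (2 * k))) /
        (1 - E2) ^ 2)) r := by
    rw [funext hγ₂]
    exact ((hE2.const_mul (2 * k * c)).div hD hden).neg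
  have hd3 : HasDerivAt γ₃
      ((K * (E * k * cos θ - E2 * (2 * k)) * (1 - E2) -
        K * (E * cos θ - E2) * (0 - E2 * (2 * k))) / (1 - E2) ^ 2) r := by
    rw [funext hγ₃]
    exact ((((hE.mul_const (cos θ)).sub hE2).const_mul K).div hD hden)
  rw [hγ₁ r, hγ₂ r, hγ₃ r, hd1.deriv, hd2.deriv, hd3.deriv]
  have hErel : E2 = E ^ 2 := by
    rw [hE2def, hE1def, sq, ← exp_add]; ring_nf
  have hE3 : exp (3 * k * (r - m s)) = E ^ 3 := by
    rw [show (3 : ℝ) * k * (r - m s) = (3 : ℕ) * (k * (r - m s)) by push_cast; ring,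
      exp_nat_mul, hE1def]
  have hsin : sin θ ^ 2 = 1 - cos θ ^ 2 := by nlinarith [sin_sq_add_cos_sq θ]
  have hM : (f + β * s) * c / ghat ≠ 0 :=
    div_ne_zero (mul_ne_zero hfs hc.ne') hghat.ne'
  have hKc : K = k * c * ((f + β * s) * c / ghat) := by rw [hKdef]; ring
  rw [hErel] at hden
  rw [hE3, ← hE1def, ← hE2def, hErel]
  exact aux_vort E (cos θ) (sin θ) K k c ((f + β * s) * c / ghat) hden hM hsin hKc
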